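/- Let N(x, γ) := 2γ² − x(3−γ)γ + x²(1 + 5γ − 2γ²) − x³(3 + 2γ) + 3x⁴ − x⁵ (the numerator of the first Lyapunov coefficient ℓ₁ along the Hopf curve of the CSTR model with β = 0). Then the set {x ∈ (0,1) : γ < x²(1−x) and N(x, γ) = 0} has exactly one element when 1/8 ≤ γ < (7 − 3√5)/2, exactly two elements when 0 < γ < 1/8, and is empty when γ ≥ (7 − 3√5)/2. -/

import Mathlib

open Set

noncomputable section Stmt13Aux

def qA (x : ℝ) : ℝ := 2 + x - 2 * x ^ 2
def qB (x : ℝ) : ℝ := 5 * x ^ 2 - 2 * x ^ 3 - 3 * x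
def qD (x : ℝ) : ℝ := x ^ 2 - 10 * x ^ 3 + 33 * x ^ 4 - 48 * x ^ 5 + 32 * x ^ 6 - 8 * x ^ 7
def qE (x : ℝ) : ℝ := 2 * qA x * (x ^ 2 * (1 - x)) + qB x
noncomputable def gm (x : ℝ) : ℝ := (-qB x - Real.sqrt (qD x)) / (2 * qA x)
noncomputable def gp (x : ℝ) : ℝ := (-qB x + Real.sqrt (qD x)) / (2 * qA x)
noncomputable def phi : ℝ := (Real.sqrt 5 - 1) / 2

lemma sqrt5_sq : Real.sqrt 5 ^ 2 = 5 := Real.sq_sqrt (by norm_num)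
lemma sqrt5_lt : Real.sqrt 5 < 2.2361 := by
  nlinarith [sqrt5_sq, Real.sqrt_nonneg 5]
lemma sqrt5_gt : 2.236 < Real.sqrt 5 := by
  nlinarith [sqrt5_sq, Real.sqrt_nonneg 5]

lemma phi_sq : phi ^ 2 = 1 - phi := by
  unfold phi; linear_combination sqrt5_sq / 4
lemma phi_gt : 0.618 < phi := by unfold phi; linarith [sqrt5_gt]
lemma phi_lt : phi < 0.61805 := by unfold phi; linarith [sqrt5_lt]
lemma half_lt_phi : 1 / 2 < phi := by linarith [phi_gt]
lemma phi_lt_one : phi < 1 := by linarith [phi_lt]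

lemma gst_gt : 1 / 8 < (7 - 3 * Real.sqrt 5) / 2 := by linarith [sqrt5_lt]

lemma qA_pos {x : ℝ} (h0 : 0 < x) (h1 : x < 1) : 0 < qA x := by unfold qA; nlinarith
lemma qA_pos' {x : ℝ} (hx : x ∈ Ioo (1/2 : ℝ) 1) : 0 < qA x := qA_pos (by linarith [hx.1]) hx.2

lemma qD_pos {x : ℝ} (hx : x ∈ Ioo (1/2 : ℝ) 1) : 0 < qD x := by
  obtain ⟨h1, h2⟩ := hx
  have hid : qD x = x^2 * (1-x)^2 * ((2*x-1) * (2*(2*x-1)*(1-x) + 1)) := by unfold qD; ring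
  rw [hid]
  have c1 : 0 < x^2 * (1-x)^2 := mul_pos (pow_pos (by linarith) 2) (pow_pos (by linarith) 2)
  have c2 : (0:ℝ) < 2*x-1 := by linarith
  have c3 : (0:ℝ) < 2*(2*x-1)*(1-x) + 1 := by nlinarith
  exact mul_pos c1 (mul_pos c2 c3)

lemma qE_pos {x : ℝ} (hx : x ∈ Ioo (1/2 : ℝ) 1) : 0 < qE x := by
  obtain ⟨h1, h2⟩ := hx
  have hid : qE x = x * (1-x) * (2*x-1) * (3 - 2*x^2) := by unfold qE qA qB; ring
  rw [hid]
  have c1 : (0:ℝ) < 3 - 2*x^2 := by nlinarith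
  have c2 : (0:ℝ) < 2*x - 1 := by linarith
  have c3 : (0:ℝ) < x := by linarith
  have c4 : (0:ℝ) < 1 - x := by linarith
  exact mul_pos (mul_pos (mul_pos c3 c4) c2) c1

-- identity: qE^2 - qD = 4 qA * x^2 (1-x)^3 (2x-1)(x^2+x-1)
lemma idE2 (x : ℝ) : qE x ^ 2 - qD x = 4 * qA x * (x^2 * (1-x)^3 * (2*x-1) * (x^2+x-1)) := by
  unfold qE qA qB qD; ring

lemma idQuad (x γ : ℝ) : 4 * qA x * (qA x * γ^2 + qB x * γ + x^2*(1-x)^3)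
    = (2 * qA x * γ + qB x)^2 - qD x := by unfold qA qB qD; ring

lemma idNbd (x : ℝ) : qA x * (x^2*(1-x))^2 + qB x * (x^2*(1-x)) + x^2*(1-x)^3
    = x^2*(1-x)^3*(2*x-1)*(x^2+x-1) := by unfold qA qB; ring

end Stmt13Aux

noncomputable section
-- For 0 < x ≤ 1/2 in the region, N > 0
lemma left_pos {x γ : ℝ} (h0 : 0 < x) (h12 : x ≤ 1/2) (hr : γ < x^2*(1-x)) :
    0 < qA x * γ^2 + qB x * γ + x^2*(1-x)^3 := by
  have hA : 0 < qA x := qA_pos h0 (by linarith)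
  have hEle : qE x ≤ 0 := by
    have hid : qE x = x * (1-x) * (2*x-1) * (3 - 2*x^2) := by unfold qE qA qB; ring
    rw [hid]
    have c1 : (0:ℝ) < 3 - 2*x^2 := by nlinarith
    have c2 : 2*x - 1 ≤ (0:ℝ) := by linarith
    nlinarith [mul_pos (mul_pos h0 (show (0:ℝ) < 1 - x by linarith)) c1]
  have h2 : qA x * (γ + x^2*(1-x)) + qB x < 0 := by
    have : qA x * (γ + x^2*(1-x)) + qB x = qE x + qA x * (γ - x^2*(1-x)) := by
      unfold qE; ring
    rw [this]
    nlinarith [mul_pos hA (show (0:ℝ) < x^2*(1-x) - γ by linarith)]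
  have h3 : 0 ≤ x^2*(1-x)^3*(2*x-1)*(x^2+x-1) := by
    have hid : x^2*(1-x)^3*(2*x-1)*(x^2+x-1) = x^2*(1-x)^3*((1-2*x)*(1-x-x^2)) := by ring
    rw [hid]
    have c1 : (0:ℝ) ≤ 1 - 2*x := by linarith
    have c2 : (0:ℝ) < 1 - x - x^2 := by nlinarith
    exact mul_nonneg (mul_nonneg (pow_nonneg h0.le 2) (pow_nonneg (by linarith) 3)) (mul_nonneg c1 c2.le)
  have hkey : qA x * γ^2 + qB x * γ + x^2*(1-x)^3
      = x^2*(1-x)^3*(2*x-1)*(x^2+x-1)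
        + (γ - x^2*(1-x)) * (qA x * (γ + x^2*(1-x)) + qB x) := by
    unfold qA qB; ring
  rw [hkey]
  nlinarith [mul_pos (show (0:ℝ) < x^2*(1-x) - γ by linarith)
    (show (0:ℝ) < -(qA x * (γ + x^2*(1-x)) + qB x) by linarith)]

lemma gm_root {x : ℝ} (hx : x ∈ Ioo (1/2 : ℝ) 1) :
    2 * qA x * gm x + qB x = -Real.sqrt (qD x) := by
  have hA := qA_pos' hx
  unfold gm; field_simp
  all_goals ring

lemma gp_root {x : ℝ} (hx : x ∈ Ioo (1/2 : ℝ) 1) :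
    2 * qA x * gp x + qB x = Real.sqrt (qD x) := by
  have hA := qA_pos' hx
  unfold gp; field_simp
  all_goals ring

lemma branch_iff {x : ℝ} (hx : x ∈ Ioo (1/2 : ℝ) 1) (γ : ℝ) :
    qA x * γ^2 + qB x * γ + x^2*(1-x)^3 = 0 ↔ γ = gm x ∨ γ = gp x := by
  have hA := qA_pos' hx
  have hD := qD_pos hx
  have hs2 : Real.sqrt (qD x) ^ 2 = qD x := Real.sq_sqrt hD.le
  constructor
  · intro h
    have h2 : (2 * qA x * γ + qB x - Real.sqrt (qD x)) * (2 * qA x * γ + qB x + Real.sqrt (qD x)) = 0 := by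
      linear_combination 4 * qA x * h - idQuad x γ - hs2
    rcases mul_eq_zero.1 h2 with h3 | h3
    · right; unfold gp; field_simp; linarith
    · left; unfold gm; field_simp; linarith
  · intro h
    rcases h with h | h
    · subst h
      have h4 := gm_root hx
      have h5 : 4 * qA x * (qA x * gm x^2 + qB x * gm x + x^2*(1-x)^3) = 0 := by
        rw [idQuad x (gm x), h4]; linear_combination hs2
      rcases mul_eq_zero.mp h5 with h6 | h6
      · exact absurd h6 (by positivity)
      · exact h6
    · subst h
      have h4 := gp_root hx
      have h5 : 4 * qA x * (qA x * gp x^2 + qB x * gp x + x^2*(1-x)^3) = 0 := by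
        rw [idQuad x (gp x), h4]; linear_combination hs2
      rcases mul_eq_zero.mp h5 with h6 | h6
      · exact absurd h6 (by positivity)
      · exact h6

lemma gm_lt_bd {x : ℝ} (hx : x ∈ Ioo (1/2 : ℝ) 1) : gm x < x^2*(1-x) := by
  have hA := qA_pos' hx
  have hE := qE_pos hx
  have hs : 0 ≤ Real.sqrt (qD x) := Real.sqrt_nonneg _
  rw [gm, div_lt_iff₀ (by linarith)]
  have : x^2*(1-x) * (2 * qA x) = qE x - qB x := by unfold qE; ring
  rw [this]; linarith

lemma gp_lt_bd_iff {x : ℝ} (hx : x ∈ Ioo (1/2 : ℝ) 1) :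
    gp x < x^2*(1-x) ↔ 0 < x^2 + x - 1 := by
  have hA := qA_pos' hx
  have hE := qE_pos hx
  have hD := qD_pos hx
  have hs : 0 ≤ Real.sqrt (qD x) := Real.sqrt_nonneg _
  have hs2 : Real.sqrt (qD x) ^ 2 = qD x := Real.sq_sqrt hD.le
  have hfac : 0 < x^2*(1-x)^3*(2*x-1) := by
    obtain ⟨h1, h2⟩ := hx
    have := mul_pos (mul_pos (pow_pos (show (0:ℝ)<x by linarith) 2)
      (pow_pos (show (0:ℝ)<1-x by linarith) 3)) (show (0:ℝ)<2*x-1 by linarith)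
    linarith [this]
  have hstep : gp x < x^2*(1-x) ↔ Real.sqrt (qD x) < qE x := by
    rw [gp, div_lt_iff₀ (by linarith)]
    constructor <;> intro h <;> [skip; skip] <;>
      · have : x^2*(1-x) * (2 * qA x) = qE x - qB x := by unfold qE; ring
        first
          | (rw [this] at h; linarith)
          | (rw [this]; linarith)
  rw [hstep]
  constructor
  · intro h
    have h2 : qD x < qE x ^ 2 := by
      nlinarith [pow_lt_pow_left₀ h hs (two_ne_zero)]
    have h4 : 0 < 4 * qA x * (x^2*(1-x)^3*(2*x-1)*(x^2+x-1)) := by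
      rw [← idE2 x]; linarith
    by_contra hcon
    push_neg at hcon
    nlinarith [mul_nonneg (mul_pos hA hfac).le (neg_nonneg.mpr hcon)]
  · intro h
    have h2 : qD x < qE x ^ 2 := by
      have h4 : 0 < 4 * qA x * (x^2*(1-x)^3*(2*x-1)*(x^2+x-1)) := by
        nlinarith [mul_pos (mul_pos hA hfac) h]
      nlinarith [idE2 x]
    have := lt_of_pow_lt_pow_left₀ 2 hE.le (by rw [hs2]; exact h2)
    exact this

lemma phi_iff {x : ℝ} (h0 : 0 < x) : phi < x ↔ 0 < x^2 + x - 1 := by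
  have hfac : x^2 + x - 1 = (x - phi) * (x + 1 + phi) := by
    linear_combination phi_sq
  have hpos : 0 < x + 1 + phi := by linarith [phi_gt]
  rw [hfac]
  constructor
  · intro h; exact mul_pos (by linarith) hpos
  · intro h; nlinarith

lemma gm_lt_eighth {x : ℝ} (hx : x ∈ Ioo (1/2 : ℝ) 1) : gm x < 1/8 := by
  have hA := qA_pos' hx
  have hs : 0 ≤ Real.sqrt (qD x) := Real.sqrt_nonneg _
  obtain ⟨h1, h2⟩ := hx
  have hF : 0 < qA x / 4 + qB x := by
    have hid : qA x / 4 + qB x = (2*x-1) * (2*(2*x-1)*(1-x) + x) / 4 := by unfold qA qB; ring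
    rw [hid]
    have c1 : (0:ℝ) < 2*x-1 := by linarith
    have c2 : (0:ℝ) < 2*(2*x-1)*(1-x) + x := by nlinarith
    positivity
  rw [gm, div_lt_iff₀ (by linarith)]
  nlinarith

end

noncomputable section

lemma Ppos {x : ℝ} (h1 : 1/2 < x) (h2 : x < 1) :
    0 < 4*x^4 - 4*x^3 - 13*x^2 + 20*x - 6 := by
  have hu : (0:ℝ) < x - 1/2 := by linarith
  have hv : (0:ℝ) < 1 - x := by linarith
  have hid : 4*x^4 - 4*x^3 - 13*x^2 + 20*x - 6 = 8*((1 - x)^4) + 80*((x - 1/2)*(1 - x)^3) + 140*((x - 1/2)^2*(1 - x)^2) + 80*((x - 1/2)^3*(1 - x)) + 16*((x - 1/2)^4) := by ring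
  nlinarith [mul_pos (pow_pos hu 2) (pow_pos hv 2), pow_pos hu 4, pow_pos hv 4,
    mul_pos hu (pow_pos hv 3), mul_pos (pow_pos hu 3) hv, hid]

lemma Hpos {x : ℝ} (h1 : 1/2 < x) (h2 : x < 1) :
    0 < 2304*x^9 - 11008*x^8 + 16192*x^7 - 384*x^6 - 18624*x^5 + 12352*x^4 + 2560*x^3 - 4640*x^2 + 1408*x - 128 := by
  have hu : (0:ℝ) < x - 1/2 := by linarith
  have hv : (0:ℝ) < 1 - x := by linarith
  have hid : 2304*x^9 - 11008*x^8 + 16192*x^7 - 384*x^6 - 18624*x^5 + 12352*x^4 + 2560*x^3 - 4640*x^2 + 1408*x - 128 = 4096*((1 - x)^9) + 71680*((x - 1/2)*(1 - x)^8) + 495872*((x - 1/2)^2*(1 - x)^7) + 1739264*((x - 1/2)^3*(1 - x)^6) + 3395584*((x - 1/2)^4*(1 - x)^5) + 3844096*((x - 1/2)^5*(1 - x)^4) + 2547712*((x - 1/2)^6*(1 - x)^3) + 970752*((x - 1/2)^7*(1 - x)^2) + 196608*((x - 1/2)^8*(1 - x)) + 16384*((x - 1/2)^9) := by ring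
  have t0 := pow_pos hv 9
  have t9 := pow_pos hu 9
  have t1 := mul_pos hu (pow_pos hv 8)
  have t2 := mul_pos (pow_pos hu 2) (pow_pos hv 7)
  have t3 := mul_pos (pow_pos hu 3) (pow_pos hv 6)
  have t4 := mul_pos (pow_pos hu 4) (pow_pos hv 5)
  have t5 := mul_pos (pow_pos hu 5) (pow_pos hv 4)
  have t6 := mul_pos (pow_pos hu 6) (pow_pos hv 3)
  have t7 := mul_pos (pow_pos hu 7) (pow_pos hv 2)
  have t8 := mul_pos (pow_pos hu 8) hv
  linarith [hid, t0, t1, t2, t3, t4, t5, t6, t7, t8, t9]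

lemma Wpos {x : ℝ} (h1 : 1/2 < x) (h2 : x ≤ 5/8) :
    0 < 48*x^8 - 168*x^7 + 112*x^6 + 240*x^5 - 434*x^4 + 258*x^3 - 60*x^2 + 4*x := by
  have hu : (0:ℝ) < x - 1/2 := by linarith
  have hw : (0:ℝ) ≤ 5/8 - x := by linarith
  have hid : 48*x^8 - 168*x^7 + 112*x^6 + 240*x^5 - 434*x^4 + 258*x^3 - 60*x^2 + 4*x = 4194304*((5/8 - x)^8) + 35913728*((x - 1/2)*(5/8 - x)^7) + 131792896*((x - 1/2)^2*(5/8 - x)^6) + 271007744*((x - 1/2)^3*(5/8 - x)^5) + 341774336*((x - 1/2)^4*(5/8 - x)^4) + 270793728*((x - 1/2)^5*(5/8 - x)^3) + 131657984*((x - 1/2)^6*(5/8 - x)^2) + 35909312*((x - 1/2)^7*(5/8 - x)) + 4205040*((x - 1/2)^8) := by ring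
  have t8 := pow_pos hu 8
  have t0 := pow_nonneg hw 8
  have t1 := mul_nonneg hu.le (pow_nonneg hw 7)
  have t2 := mul_nonneg (pow_nonneg hu.le 2) (pow_nonneg hw 6)
  have t3 := mul_nonneg (pow_nonneg hu.le 3) (pow_nonneg hw 5)
  have t4 := mul_nonneg (pow_nonneg hu.le 4) (pow_nonneg hw 4)
  have t5 := mul_nonneg (pow_nonneg hu.le 5) (pow_nonneg hw 3)
  have t6 := mul_nonneg (pow_nonneg hu.le 6) (pow_nonneg hw 2)
  have t7 := mul_nonneg (pow_nonneg hu.le 7) hw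
  linarith [hid, t0, t1, t2, t3, t4, t5, t6, t7, t8]

lemma qD_half : qD (1/2) = 0 := by unfold qD; norm_num
lemma qD_one : qD 1 = 0 := by unfold qD; norm_num

lemma gm_half : gm (1/2) = 1/8 := by
  unfold gm; rw [qD_half, Real.sqrt_zero]; unfold qA qB; norm_num
lemma gm_one : gm 1 = 0 := by
  unfold gm; rw [qD_one, Real.sqrt_zero]; unfold qA qB; norm_num
lemma gp_one : gp 1 = 0 := by
  unfold gp; rw [qD_one, Real.sqrt_zero]; unfold qA qB; norm_num

lemma gp_phi : gp phi = (7 - 3 * Real.sqrt 5) / 2 := by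
  have hz : phi^2 + phi - 1 = 0 := by linarith [phi_sq]
  have hA : 0 < qA phi := qA_pos (by linarith [phi_gt]) (by linarith [phi_lt])
  have hDval : qD phi = qE phi^2 := by
    first
      | linear_combination (-1 : ℝ) * idE2 phi - (4*qA phi*(phi^2*(1-phi)^3*(2*phi-1)))*hz
      | linear_combination (-1 : ℝ) * idE2 phi + (4*qA phi*(phi^2*(1-phi)^3*(2*phi-1)))*hz
      | linear_combination idE2 phi + (4*qA phi*(phi^2*(1-phi)^3*(2*phi-1)))*hz
      | linear_combination idE2 phi - (4*qA phi*(phi^2*(1-phi)^3*(2*phi-1)))*hz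
  have hEnn : 0 ≤ qE phi := by
    have hid : qE phi = phi * (1-phi) * (2*phi-1) * (3 - 2*phi^2) := by unfold qE qA qB; ring
    rw [hid]
    have g1 := phi_gt; have g2 := phi_lt
    have c1 : (0:ℝ) < phi := by linarith
    have c2 : (0:ℝ) < 1 - phi := by linarith
    have c3 : (0:ℝ) < 2*phi - 1 := by linarith
    have c4 : (0:ℝ) < 3 - 2*phi^2 := by nlinarith
    positivity
  have hs : Real.sqrt (qD phi) = qE phi := by rw [hDval]; exact Real.sqrt_sq hEnn
  unfold gp; rw [hs]
  have h2 : -qB phi + qE phi = 2 * qA phi * (phi^2*(1-phi)) := by unfold qE; ring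
  rw [h2, mul_div_cancel_left₀ _ (ne_of_gt (by linarith : (0:ℝ) < 2 * qA phi))]
  unfold phi
  linear_combination ((5 - Real.sqrt 5)/8) * sqrt5_sq

end

set_option maxHeartbeats 1600000
noncomputable section

lemma hasDerivAt_qA (x : ℝ) : HasDerivAt qA (1 - 4*x) x := by
  have h : HasDerivAt (fun y : ℝ => 2 + y - 2*y^2) ((0 + 1) - 2*(↑(2:ℕ)*x^(2-1))) x :=
    ((hasDerivAt_const x (2:ℝ)).add (hasDerivAt_id' x)).sub ((hasDerivAt_pow 2 x).const_mul 2)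
  convert h using 1
  · rfl
  push_cast; ring

lemma hasDerivAt_qB (x : ℝ) : HasDerivAt qB (10*x - 6*x^2 - 3) x := by
  have h : HasDerivAt (fun y : ℝ => 5*y^2 - 2*y^3 - 3*y)
      (5*(↑(2:ℕ)*x^(2-1)) - 2*(↑(3:ℕ)*x^(3-1)) - 3*1) x :=
    (((hasDerivAt_pow 2 x).const_mul 5).sub ((hasDerivAt_pow 3 x).const_mul 2)).sub
      ((hasDerivAt_id' x).const_mul 3)
  convert h using 1
  · rfl
  push_cast; ring

lemma hasDerivAt_qD (x : ℝ) : HasDerivAt qD (2*x - 30*x^2 + 132*x^3 - 240*x^4 + 192*x^5 - 56*x^6) x := by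
  have h : HasDerivAt (fun y : ℝ => y^2 - 10*y^3 + 33*y^4 - 48*y^5 + 32*y^6 - 8*y^7)
      ((((((↑(2:ℕ)*x^(2-1)) - 10*(↑(3:ℕ)*x^(3-1))) + 33*(↑(4:ℕ)*x^(4-1))) - 48*(↑(5:ℕ)*x^(5-1))) + 32*(↑(6:ℕ)*x^(6-1))) - 8*(↑(7:ℕ)*x^(7-1))) x :=
    (((((hasDerivAt_pow 2 x).sub ((hasDerivAt_pow 3 x).const_mul 10)).add
      ((hasDerivAt_pow 4 x).const_mul 33)).sub ((hasDerivAt_pow 5 x).const_mul 48)).add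
      ((hasDerivAt_pow 6 x).const_mul 32)).sub ((hasDerivAt_pow 7 x).const_mul 8)
  convert h using 1
  · rfl
  push_cast; ring

lemma deriv_gm_neg {x : ℝ} (hx : x ∈ Ioo (1/2:ℝ) 1) : deriv gm x < 0 := by
  obtain ⟨h1, h2⟩ := hx
  have hA := qA_pos' ⟨h1, h2⟩
  have hD := qD_pos ⟨h1, h2⟩
  set s := Real.sqrt (qD x) with hs_def
  have hs : 0 < s := Real.sqrt_pos.mpr hD
  have hs2 : s^2 = qD x := Real.sq_sqrt hD.le
  have hs2' : s^2 = (x^2 - 10*x^3 + 33*x^4 - 48*x^5 + 32*x^6 - 8*x^7) := by rw [hs2]; unfold qD; ring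
  have hsd : HasDerivAt (fun y => Real.sqrt (qD y)) ((2*x - 30*x^2 + 132*x^3 - 240*x^4 + 192*x^5 - 56*x^6)/(2*s)) x := by
    have h := (hasDerivAt_qD x).sqrt (ne_of_gt hD)
    rw [← hs_def] at h; exact h
  have hnum : HasDerivAt (fun y => -qB y - Real.sqrt (qD y))
      (-(10*x - 6*x^2 - 3) - (2*x - 30*x^2 + 132*x^3 - 240*x^4 + 192*x^5 - 56*x^6)/(2*s)) x := ((hasDerivAt_qB x).neg).sub hsd
  have hden : HasDerivAt (fun y => 2*qA y) (2*(1 - 4*x)) x := (hasDerivAt_qA x).const_mul 2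
  have hgm : HasDerivAt gm
      (((-(10*x - 6*x^2 - 3) - (2*x - 30*x^2 + 132*x^3 - 240*x^4 + 192*x^5 - 56*x^6)/(2*s))*(2*qA x) - (-qB x - s)*(2*(1 - 4*x)))/(2*qA x)^2) x := by
    have h := hnum.div hden (ne_of_gt (by linarith))
    rw [← hs_def] at h
    exact h
  rw [hgm.deriv]
  apply div_neg_of_neg_of_pos _ (pow_pos (by linarith : (0:ℝ) < 2*qA x) 2)
  have hdd : (2*x - 30*x^2 + 132*x^3 - 240*x^4 + 192*x^5 - 56*x^6)/(2*s)*(2*s) = (2*x - 30*x^2 + 132*x^3 - 240*x^4 + 192*x^5 - 56*x^6) := div_mul_cancel₀ _ (by positivity)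
  have key : ((-(10*x - 6*x^2 - 3) - (2*x - 30*x^2 + 132*x^3 - 240*x^4 + 192*x^5 - 56*x^6)/(2*s))*(2*qA x) - (-qB x - s)*(2*(1 - 4*x))) * (2*s)
      = -(4*s*(4*x^4 - 4*x^3 - 13*x^2 + 20*x - 6) + 2*(48*x^8 - 168*x^7 + 112*x^6 + 240*x^5 - 434*x^4 + 258*x^3 - 60*x^2 + 4*x)) := by
    unfold qA qB
    first
      | linear_combination (-2*(2 + x - 2*x^2)) * hdd + (4*(1 - 4*x)) * hs2'
      | linear_combination (2*(2 + x - 2*x^2)) * hdd + (4*(1 - 4*x)) * hs2'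
      | linear_combination (-2*(2 + x - 2*x^2)) * hdd - (4*(1 - 4*x)) * hs2'
      | linear_combination (2*(2 + x - 2*x^2)) * hdd - (4*(1 - 4*x)) * hs2'
  have hP := Ppos h1 h2
  have h2sP : 0 < 2*s*(4*x^4 - 4*x^3 - 13*x^2 + 20*x - 6) := mul_pos (by linarith) hP
  have hpos : 0 < 4*s*(4*x^4 - 4*x^3 - 13*x^2 + 20*x - 6) + 2*(48*x^8 - 168*x^7 + 112*x^6 + 240*x^5 - 434*x^4 + 258*x^3 - 60*x^2 + 4*x) := by
    by_cases hx58 : x ≤ 5/8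
    · have hW := Wpos h1 hx58
      nlinarith [mul_pos hs hP]
    · push_neg at hx58
      have hq : 0 < x^2 + x - 1 := by nlinarith
      have hHp := Hpos h1 h2
      have hprod : 0 < x^2*(1-x)^3*(x^2+x-1)*(2304*x^9 - 11008*x^8 + 16192*x^7 - 384*x^6 - 18624*x^5 + 12352*x^4 + 2560*x^3 - 4640*x^2 + 1408*x - 128) :=
        mul_pos (mul_pos (mul_pos (pow_pos (by linarith : (0:ℝ) < x) 2)
          (pow_pos (by linarith : (0:ℝ) < 1-x) 3)) hq) hHp
      have hGid : 4*(x^2 - 10*x^3 + 33*x^4 - 48*x^5 + 32*x^6 - 8*x^7)*(4*x^4 - 4*x^3 - 13*x^2 + 20*x - 6)^2 - (48*x^8 - 168*x^7 + 112*x^6 + 240*x^5 - 434*x^4 + 258*x^3 - 60*x^2 + 4*x)^2 = x^2*(1-x)^3*(x^2+x-1)*(2304*x^9 - 11008*x^8 + 16192*x^7 - 384*x^6 - 18624*x^5 + 12352*x^4 + 2560*x^3 - 4640*x^2 + 1408*x - 128) := by ring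
      have hG : (48*x^8 - 168*x^7 + 112*x^6 + 240*x^5 - 434*x^4 + 258*x^3 - 60*x^2 + 4*x)^2 < 4*(x^2 - 10*x^3 + 33*x^4 - 48*x^5 + 32*x^6 - 8*x^7)*(4*x^4 - 4*x^3 - 13*x^2 + 20*x - 6)^2 := by linarith
      have e1 : (2*s*(4*x^4 - 4*x^3 - 13*x^2 + 20*x - 6))^2 = 4*(x^2 - 10*x^3 + 33*x^4 - 48*x^5 + 32*x^6 - 8*x^7)*(4*x^4 - 4*x^3 - 13*x^2 + 20*x - 6)^2 := by rw [← hs2']; ring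
      by_contra hc
      push_neg at hc
      have hWle : 2*s*(4*x^4 - 4*x^3 - 13*x^2 + 20*x - 6) ≤ -(48*x^8 - 168*x^7 + 112*x^6 + 240*x^5 - 434*x^4 + 258*x^3 - 60*x^2 + 4*x) := by linarith
      have hsq := mul_le_mul hWle hWle h2sP.le (by linarith)
      nlinarith [hsq, hG, e1]
  by_contra hc
  push_neg at hc
  have hge := mul_nonneg hc (by linarith : (0:ℝ) ≤ 2*s)
  linarith [key, hpos, hge]

lemma deriv_gp_neg {x : ℝ} (hx : x ∈ Ioo (1/2:ℝ) 1) (hphi : phi < x) : deriv gp x < 0 := by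
  obtain ⟨h1, h2⟩ := hx
  have hA := qA_pos' ⟨h1, h2⟩
  have hD := qD_pos ⟨h1, h2⟩
  set s := Real.sqrt (qD x) with hs_def
  have hs : 0 < s := Real.sqrt_pos.mpr hD
  have hs2 : s^2 = qD x := Real.sq_sqrt hD.le
  have hs2' : s^2 = (x^2 - 10*x^3 + 33*x^4 - 48*x^5 + 32*x^6 - 8*x^7) := by rw [hs2]; unfold qD; ring
  have hsd : HasDerivAt (fun y => Real.sqrt (qD y)) ((2*x - 30*x^2 + 132*x^3 - 240*x^4 + 192*x^5 - 56*x^6)/(2*s)) x := by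
    have h := (hasDerivAt_qD x).sqrt (ne_of_gt hD)
    rw [← hs_def] at h; exact h
  have hnum : HasDerivAt (fun y => -qB y + Real.sqrt (qD y))
      (-(10*x - 6*x^2 - 3) + (2*x - 30*x^2 + 132*x^3 - 240*x^4 + 192*x^5 - 56*x^6)/(2*s)) x := ((hasDerivAt_qB x).neg).add hsd
  have hden : HasDerivAt (fun y => 2*qA y) (2*(1 - 4*x)) x := (hasDerivAt_qA x).const_mul 2
  have hgm : HasDerivAt gp
      (((-(10*x - 6*x^2 - 3) + (2*x - 30*x^2 + 132*x^3 - 240*x^4 + 192*x^5 - 56*x^6)/(2*s))*(2*qA x) - (-qB x + s)*(2*(1 - 4*x)))/(2*qA x)^2) x := by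
    have h := hnum.div hden (ne_of_gt (by linarith))
    rw [← hs_def] at h
    exact h
  rw [hgm.deriv]
  apply div_neg_of_neg_of_pos _ (pow_pos (by linarith : (0:ℝ) < 2*qA x) 2)
  have hdd : (2*x - 30*x^2 + 132*x^3 - 240*x^4 + 192*x^5 - 56*x^6)/(2*s)*(2*s) = (2*x - 30*x^2 + 132*x^3 - 240*x^4 + 192*x^5 - 56*x^6) := div_mul_cancel₀ _ (by positivity)
  have key : ((-(10*x - 6*x^2 - 3) + (2*x - 30*x^2 + 132*x^3 - 240*x^4 + 192*x^5 - 56*x^6)/(2*s))*(2*qA x) - (-qB x + s)*(2*(1 - 4*x))) * (2*s)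
      = -(4*s*(4*x^4 - 4*x^3 - 13*x^2 + 20*x - 6)) + 2*(48*x^8 - 168*x^7 + 112*x^6 + 240*x^5 - 434*x^4 + 258*x^3 - 60*x^2 + 4*x) := by
    unfold qA qB
    first
      | linear_combination (-2*(2 + x - 2*x^2)) * hdd + (4*(1 - 4*x)) * hs2'
      | linear_combination (2*(2 + x - 2*x^2)) * hdd + (4*(1 - 4*x)) * hs2'
      | linear_combination (-2*(2 + x - 2*x^2)) * hdd - (4*(1 - 4*x)) * hs2'
      | linear_combination (2*(2 + x - 2*x^2)) * hdd - (4*(1 - 4*x)) * hs2'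
  have hP := Ppos h1 h2
  have h2sP : 0 < 2*s*(4*x^4 - 4*x^3 - 13*x^2 + 20*x - 6) := mul_pos (by linarith) hP
  have hpos : 0 < 4*s*(4*x^4 - 4*x^3 - 13*x^2 + 20*x - 6) - 2*(48*x^8 - 168*x^7 + 112*x^6 + 240*x^5 - 434*x^4 + 258*x^3 - 60*x^2 + 4*x) := by
    have hq : 0 < x^2 + x - 1 := (phi_iff (by linarith : (0:ℝ) < x)).mp hphi
    have hHp := Hpos h1 h2
    have hprod : 0 < x^2*(1-x)^3*(x^2+x-1)*(2304*x^9 - 11008*x^8 + 16192*x^7 - 384*x^6 - 18624*x^5 + 12352*x^4 + 2560*x^3 - 4640*x^2 + 1408*x - 128) :=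
      mul_pos (mul_pos (mul_pos (pow_pos (by linarith : (0:ℝ) < x) 2)
        (pow_pos (by linarith : (0:ℝ) < 1-x) 3)) hq) hHp
    have hGid : 4*(x^2 - 10*x^3 + 33*x^4 - 48*x^5 + 32*x^6 - 8*x^7)*(4*x^4 - 4*x^3 - 13*x^2 + 20*x - 6)^2 - (48*x^8 - 168*x^7 + 112*x^6 + 240*x^5 - 434*x^4 + 258*x^3 - 60*x^2 + 4*x)^2 = x^2*(1-x)^3*(x^2+x-1)*(2304*x^9 - 11008*x^8 + 16192*x^7 - 384*x^6 - 18624*x^5 + 12352*x^4 + 2560*x^3 - 4640*x^2 + 1408*x - 128) := by ring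
    have hG : (48*x^8 - 168*x^7 + 112*x^6 + 240*x^5 - 434*x^4 + 258*x^3 - 60*x^2 + 4*x)^2 < 4*(x^2 - 10*x^3 + 33*x^4 - 48*x^5 + 32*x^6 - 8*x^7)*(4*x^4 - 4*x^3 - 13*x^2 + 20*x - 6)^2 := by linarith
    have e1 : (2*s*(4*x^4 - 4*x^3 - 13*x^2 + 20*x - 6))^2 = 4*(x^2 - 10*x^3 + 33*x^4 - 48*x^5 + 32*x^6 - 8*x^7)*(4*x^4 - 4*x^3 - 13*x^2 + 20*x - 6)^2 := by rw [← hs2']; ring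
    by_contra hc
    push_neg at hc
    have hWle : 2*s*(4*x^4 - 4*x^3 - 13*x^2 + 20*x - 6) ≤ (48*x^8 - 168*x^7 + 112*x^6 + 240*x^5 - 434*x^4 + 258*x^3 - 60*x^2 + 4*x) := by linarith
    have hsq := mul_le_mul hWle hWle h2sP.le (by linarith)
    nlinarith [hsq, hG, e1]
  by_contra hc
  push_neg at hc
  have hge := mul_nonneg hc (by linarith : (0:ℝ) ≤ 2*s)
  linarith [key, hpos, hge]

end

set_option maxHeartbeats 1000000
noncomputable section

lemma contOn_gm : ContinuousOn gm (Icc (1/2:ℝ) 1) := by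
  have cB : Continuous qB := by unfold qB; fun_prop
  have cD : Continuous qD := by unfold qD; fun_prop
  have cA : Continuous qA := by unfold qA; fun_prop
  have hnum : Continuous fun y : ℝ => -qB y - Real.sqrt (qD y) :=
    (cB.neg).sub (Real.continuous_sqrt.comp cD)
  unfold gm
  refine ContinuousOn.div hnum.continuousOn ((continuous_const.mul cA).continuousOn) ?_
  intro x hx
  have : 0 < qA x := by
    obtain ⟨h1, h2⟩ := hx; unfold qA; nlinarith
  positivity

lemma contOn_gp : ContinuousOn gp (Icc (1/2:ℝ) 1) := by
  have cB : Continuous qB := by unfold qB; fun_prop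
  have cD : Continuous qD := by unfold qD; fun_prop
  have cA : Continuous qA := by unfold qA; fun_prop
  have hnum : Continuous fun y : ℝ => -qB y + Real.sqrt (qD y) :=
    (cB.neg).add (Real.continuous_sqrt.comp cD)
  unfold gp
  refine ContinuousOn.div hnum.continuousOn ((continuous_const.mul cA).continuousOn) ?_
  intro x hx
  have : 0 < qA x := by
    obtain ⟨h1, h2⟩ := hx; unfold qA; nlinarith
  positivity

lemma anti_gm : StrictAntiOn gm (Icc (1/2:ℝ) 1) :=
  strictAntiOn_of_deriv_neg (convex_Icc _ _) contOn_gm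
    (by rw [interior_Icc]; exact fun x hx => deriv_gm_neg hx)

lemma anti_gp : StrictAntiOn gp (Icc phi 1) :=
  strictAntiOn_of_deriv_neg (convex_Icc _ _)
    (contOn_gp.mono (Icc_subset_Icc half_lt_phi.le le_rfl))
    (by
      rw [interior_Icc]
      intro x hx
      exact deriv_gp_neg ⟨lt_trans half_lt_phi hx.1, hx.2⟩ hx.1)

lemma mem_char {γ x : ℝ} :
    (x ∈ Ioo (0:ℝ) 1 ∧ γ < x^2*(1-x) ∧ qA x*γ^2 + qB x*γ + x^2*(1-x)^3 = 0)
    ↔ (x ∈ Ioo (1/2:ℝ) 1 ∧ (γ = gm x ∨ (γ = gp x ∧ phi < x))) := by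
  constructor
  · rintro ⟨⟨hx0, hx1⟩, hreg, hN⟩
    have hhalf : 1/2 < x := by
      by_contra hle; push_neg at hle
      exact absurd hN (ne_of_gt (left_pos hx0 hle hreg))
    refine ⟨⟨hhalf, hx1⟩, ?_⟩
    rcases (branch_iff ⟨hhalf, hx1⟩ γ).mp hN with h | h
    · exact Or.inl h
    · refine Or.inr ⟨h, (phi_iff hx0).mpr ?_⟩
      have hlt : gp x < x^2*(1-x) := by rw [← h]; exact hreg
      exact (gp_lt_bd_iff ⟨hhalf, hx1⟩).mp hlt
  · rintro ⟨⟨hhalf, hx1⟩, h⟩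
    have hx : x ∈ Ioo (1/2:ℝ) 1 := ⟨hhalf, hx1⟩
    have hx0 : (0:ℝ) < x := by linarith
    refine ⟨⟨hx0, hx1⟩, ?_, ?_⟩
    · rcases h with h | ⟨h, hphi⟩
      · rw [h]; exact gm_lt_bd hx
      · rw [h]; exact (gp_lt_bd_iff hx).mpr ((phi_iff hx0).mp hphi)
    · rcases h with h | ⟨h, _⟩
      · exact (branch_iff hx γ).mpr (Or.inl h)
      · exact (branch_iff hx γ).mpr (Or.inr h)

lemma exists_gm {γ : ℝ} (h0 : 0 < γ) (h1 : γ < 1/8) : ∃ a ∈ Ioo (1/2:ℝ) 1, gm a = γ := by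
  have hsub := intermediate_value_Icc' (by norm_num : (1/2:ℝ) ≤ 1) contOn_gm
  have hmem : γ ∈ Icc (gm 1) (gm (1/2)) := by
    rw [gm_one, gm_half]; exact ⟨h0.le, h1.le⟩
  obtain ⟨a, haI, hga⟩ := hsub hmem
  refine ⟨a, ⟨?_, ?_⟩, hga⟩
  · rcases haI.1.lt_or_eq with h | h
    · exact h
    · exfalso; rw [← h, gm_half] at hga; linarith
  · rcases haI.2.lt_or_eq with h | h
    · exact h
    · exfalso; rw [h, gm_one] at hga; linarith

lemma exists_gp {γ : ℝ} (h0 : 0 < γ) (h1 : γ < (7 - 3*Real.sqrt 5)/2) :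
    ∃ b ∈ Ioo phi 1, gp b = γ := by
  have hsub := intermediate_value_Icc' phi_lt_one.le
    (contOn_gp.mono (Icc_subset_Icc half_lt_phi.le le_rfl))
  have hmem : γ ∈ Icc (gp 1) (gp phi) := by
    rw [gp_one, gp_phi]; exact ⟨h0.le, h1.le⟩
  obtain ⟨b, hbI, hgb⟩ := hsub hmem
  refine ⟨b, ⟨?_, ?_⟩, hgb⟩
  · rcases hbI.1.lt_or_eq with h | h
    · exact h
    · exfalso; rw [← h, gp_phi] at hgb; linarith
  · rcases hbI.2.lt_or_eq with h | h
    · exact h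
    · exfalso; rw [h, gp_one] at hgb; linarith

/-- Let `N(x,γ)` be the numerator of the first Lyapunov coefficient along
the Hopf curve of the CSTR model with `β = 0`. The set
`{x ∈ (0,1) : γ < x²(1−x) ∧ N(x,γ) = 0}` has exactly one element when
`1/8 ≤ γ < (7 − 3√5)/2`, exactly two elements when `0 < γ < 1/8`, and is empty when
`γ ≥ (7 − 3√5)/2`. -/
theorem stmt_13 (γ : ℝ) :
    let N : ℝ → ℝ := fun x => 2 * γ ^ 2 - x * (3 - γ) * γ + x ^ 2 * (1 + 5 * γ - 2 * γ ^ 2)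
      - x ^ 3 * (3 + 2 * γ) + 3 * x ^ 4 - x ^ 5
    let S := {x : ℝ | x ∈ Set.Ioo (0 : ℝ) 1 ∧ γ < x ^ 2 * (1 - x) ∧ N x = 0}
    ((1 / 8 ≤ γ ∧ γ < (7 - 3 * Real.sqrt 5) / 2) → S.encard = 1) ∧
    ((0 < γ ∧ γ < 1 / 8) → S.encard = 2) ∧
    ((7 - 3 * Real.sqrt 5) / 2 ≤ γ → S = ∅) := by
  intro N S
  have hmem : ∀ x : ℝ, x ∈ S ↔
      (x ∈ Ioo (1/2:ℝ) 1 ∧ (γ = gm x ∨ (γ = gp x ∧ phi < x))) := by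
    intro x
    have hNx : (2 * γ ^ 2 - x * (3 - γ) * γ + x ^ 2 * (1 + 5 * γ - 2 * γ ^ 2)
        - x ^ 3 * (3 + 2 * γ) + 3 * x ^ 4 - x ^ 5)
        = qA x * γ^2 + qB x * γ + x^2*(1-x)^3 := by unfold qA qB; ring
    have h1 : x ∈ S ↔ (x ∈ Ioo (0:ℝ) 1 ∧ γ < x^2*(1-x)
        ∧ qA x * γ^2 + qB x * γ + x^2*(1-x)^3 = 0) := by
      rw [show (x ∈ S) ↔ (x ∈ Set.Ioo (0 : ℝ) 1 ∧ γ < x ^ 2 * (1 - x) ∧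
        (2 * γ ^ 2 - x * (3 - γ) * γ + x ^ 2 * (1 + 5 * γ - 2 * γ ^ 2)
          - x ^ 3 * (3 + 2 * γ) + 3 * x ^ 4 - x ^ 5) = 0) from Iff.rfl, hNx]
    rw [h1]
    exact mem_char
  refine ⟨?_, ?_, ?_⟩
  · rintro ⟨hg1, hg2⟩
    obtain ⟨b, hbI, hgb⟩ := exists_gp (by linarith [gst_gt]) hg2
    have hbIoo : b ∈ Ioo (1/2:ℝ) 1 := ⟨lt_trans half_lt_phi hbI.1, hbI.2⟩
    have hbmem : b ∈ S := (hmem b).mpr ⟨hbIoo, Or.inr ⟨hgb.symm, hbI.1⟩⟩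
    have hsing : S = {b} := by
      refine Set.eq_singleton_iff_unique_mem.mpr ⟨hbmem, ?_⟩
      intro y hy
      rcases (hmem y).mp hy with ⟨hyI, h | ⟨h, hyphi⟩⟩
      · exfalso; have := gm_lt_eighth hyI; linarith [h ▸ this]
      · exact anti_gp.injOn ⟨hyphi.le, hyI.2.le⟩ ⟨hbI.1.le, hbI.2.le⟩
          (h.symm.trans hgb.symm)
    rw [hsing]; exact Set.encard_singleton b
  · rintro ⟨hg0, hg1⟩
    obtain ⟨a, haI, hga⟩ := exists_gm hg0 hg1
    obtain ⟨b, hbI, hgb⟩ := exists_gp hg0 (by linarith [gst_gt])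
    have hbIoo : b ∈ Ioo (1/2:ℝ) 1 := ⟨lt_trans half_lt_phi hbI.1, hbI.2⟩
    have hamem : a ∈ S := (hmem a).mpr ⟨haI, Or.inl hga.symm⟩
    have hbmem : b ∈ S := (hmem b).mpr ⟨hbIoo, Or.inr ⟨hgb.symm, hbI.1⟩⟩
    have hab : a ≠ b := by
      intro he
      have hA := qA_pos' haI
      have hD := qD_pos haI
      have heq : gm a = gp a := by
        rw [← hga, ← he] at hgb; exact hgb.symm
      have h2 : -qB a - Real.sqrt (qD a) = -qB a + Real.sqrt (qD a) := by
        have hne : (2*qA a) ≠ 0 := by positivity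
        unfold gm gp at heq
        field_simp at heq
        linarith
      have hspos : 0 < Real.sqrt (qD a) := Real.sqrt_pos.mpr hD
      linarith
    have hpair : S = {a, b} := by
      ext y
      rw [hmem y]
      constructor
      · rintro ⟨hyI, h | ⟨h, hyphi⟩⟩
        · left
          exact anti_gm.injOn ⟨hyI.1.le, hyI.2.le⟩ ⟨haI.1.le, haI.2.le⟩
            (h.symm.trans hga.symm)
        · right
          exact anti_gp.injOn ⟨hyphi.le, hyI.2.le⟩ ⟨hbI.1.le, hbI.2.le⟩
            (h.symm.trans hgb.symm)
      · rintro (rfl | rfl)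
        · exact ⟨haI, Or.inl hga.symm⟩
        · exact ⟨hbIoo, Or.inr ⟨hgb.symm, hbI.1⟩⟩
    rw [hpair]; exact Set.encard_pair hab
  · intro hg
    refine Set.eq_empty_iff_forall_notMem.mpr ?_
    intro y hy
    rcases (hmem y).mp hy with ⟨hyI, h | ⟨h, hyphi⟩⟩
    · have h8 := gm_lt_eighth hyI
      have := gst_gt
      rw [← h] at h8
      linarith
    · have hlt : gp y < gp phi :=
        anti_gp ⟨le_rfl, phi_lt_one.le⟩ ⟨hyphi.le, hyI.2.le⟩ hyphi
      rw [gp_phi, ← h] at hlt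
      linarith

end
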